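/- arXiv:2512.12390 — 4 statements merged into one kernel-verified Lean document; each statement's English description precedes it below -/
import Mathlib

section
/- Let 0 < c < √2. Then there is a constant δ_c > 0 (one may take δ_c = (1 - c⁴/4)/10) such that for all f ∈ H²(ℝ), ∫_ℝ (f''(x))² - c²(f'(x))² + f(x)² dx ≥ δ_c ‖f‖²_{H²}. -/
open MeasureTheory Real Filter Set

private lemma abs_mul_le_half (a b : ℝ) : |a * b| ≤ (a ^ 2 + b ^ 2) / 2 := by
  rcases abs_cases (a * b) with ⟨h, _⟩ | ⟨h, _⟩ <;> rw [h] <;>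
    nlinarith [sq_nonneg (a - b), sq_nonneg (a + b)]

/-- Main integration-by-parts fact: for `f ∈ H²`, `∫ f'² = - ∫ f f''`. -/
private lemma key (f : ℝ → ℝ) (hf : ContDiff ℝ 2 f)
    (hB : Integrable (fun x => (f x) ^ 2))
    (hA : Integrable (fun x => (deriv f x) ^ 2))
    (hC : Integrable (fun x => (deriv (deriv f) x) ^ 2)) :
    (∫ x : ℝ, (deriv f x) ^ 2) = - ∫ x : ℝ, f x * deriv (deriv f) x := by
  have hf' : ContDiff ℝ 1 (deriv f) := by
    have := (contDiff_succ_iff_deriv (n := 1)).mp (by exact_mod_cast hf)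
    exact this.2.2
  have hfd : Differentiable ℝ f := hf.differentiable (by norm_num)
  have hf'd : Differentiable ℝ (deriv f) := hf'.differentiable (by norm_num)
  have hfc : Continuous f := hfd.continuous
  have hf'c : Continuous (deriv f) := hf'd.continuous
  have hf''c : Continuous (deriv (deriv f)) := by
    have := (contDiff_succ_iff_deriv (n := 0)).mp (by exact_mod_cast hf')
    exact this.2.2.continuous
  -- integrability of products
  have int_ff' : Integrable (fun x => f x * deriv f x) := by
    refine (hB.add hA).div_const 2 |>.mono'
      ((hfc.mul hf'c).aestronglyMeasurable) ?_
    filter_upwards with x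
    rw [Real.norm_eq_abs]; exact abs_mul_le_half (f x) (deriv f x)
  have int_f'f'' : Integrable (fun x => deriv f x * deriv (deriv f) x) := by
    refine (hA.add hC).div_const 2 |>.mono'
      ((hf'c.mul hf''c).aestronglyMeasurable) ?_
    filter_upwards with x
    rw [Real.norm_eq_abs]; exact abs_mul_le_half (deriv f x) (deriv (deriv f) x)
  have int_ff'' : Integrable (fun x => f x * deriv (deriv f) x) := by
    refine (hB.add hC).div_const 2 |>.mono'
      ((hfc.mul hf''c).aestronglyMeasurable) ?_
    filter_upwards with x
    rw [Real.norm_eq_abs]; exact abs_mul_le_half (f x) (deriv (deriv f) x)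
  -- f² → 0 and f'² → 0 at ±∞
  have hu : ∀ x : ℝ, HasDerivAt (fun y => (f y) ^ 2) (2 * (f x * deriv f x)) x := by
    intro x
    have := (hfd x).hasDerivAt.fun_pow 2
    exact this.congr_deriv (by norm_num; ring)
  have hv : ∀ x : ℝ, HasDerivAt (fun y => (deriv f y) ^ 2)
      (2 * (deriv f x * deriv (deriv f) x)) x := by
    intro x
    have := (hf'd x).hasDerivAt.fun_pow 2
    exact this.congr_deriv (by norm_num; ring)
  have hu_top : Tendsto (fun y => (f y) ^ 2) atTop (nhds 0) :=
    tendsto_zero_of_hasDerivAt_of_integrableOn_Ioi (a := 0)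
      (fun x _ => hu x) ((int_ff'.const_mul 2).integrableOn) hB.integrableOn
  have hu_bot : Tendsto (fun y => (f y) ^ 2) atBot (nhds 0) :=
    tendsto_zero_of_hasDerivAt_of_integrableOn_Iic (a := 0)
      (fun x _ => hu x) ((int_ff'.const_mul 2).integrableOn) hB.integrableOn
  have hv_top : Tendsto (fun y => (deriv f y) ^ 2) atTop (nhds 0) :=
    tendsto_zero_of_hasDerivAt_of_integrableOn_Ioi (a := 0)
      (fun x _ => hv x) ((int_f'f''.const_mul 2).integrableOn) hA.integrableOn
  have hv_bot : Tendsto (fun y => (deriv f y) ^ 2) atBot (nhds 0) :=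
    tendsto_zero_of_hasDerivAt_of_integrableOn_Iic (a := 0)
      (fun x _ => hv x) ((int_f'f''.const_mul 2).integrableOn) hA.integrableOn
  -- hence g = f f' → 0 at ±∞
  set g : ℝ → ℝ := fun x => f x * deriv f x with hg_def
  have hsq : ∀ x, -(((f x) ^ 2 + (deriv f x) ^ 2) / 2) ≤ g x ∧
      g x ≤ ((f x) ^ 2 + (deriv f x) ^ 2) / 2 := by
    intro x
    exact abs_le.mp (abs_mul_le_half (f x) (deriv f x))
  have hg_top : Tendsto g atTop (nhds 0) := by
    have hbound : Tendsto (fun x => (((f x) ^ 2 + (deriv f x) ^ 2) / 2)) atTop (nhds 0) := by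
      simpa using (hu_top.add hv_top).div_const 2
    have hboundneg : Tendsto (fun x => -(((f x) ^ 2 + (deriv f x) ^ 2) / 2)) atTop (nhds 0) := by
      simpa using hbound.neg
    exact tendsto_of_tendsto_of_tendsto_of_le_of_le hboundneg hbound
      (fun x => (hsq x).1) (fun x => (hsq x).2)
  have hg_bot : Tendsto g atBot (nhds 0) := by
    have hbound : Tendsto (fun x => (((f x) ^ 2 + (deriv f x) ^ 2) / 2)) atBot (nhds 0) := by
      simpa using (hu_bot.add hv_bot).div_const 2
    have hboundneg : Tendsto (fun x => -(((f x) ^ 2 + (deriv f x) ^ 2) / 2)) atBot (nhds 0) := by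
      simpa using hbound.neg
    exact tendsto_of_tendsto_of_tendsto_of_le_of_le hboundneg hbound
      (fun x => (hsq x).1) (fun x => (hsq x).2)
  -- derivative of g
  have hg' : ∀ x : ℝ, HasDerivAt g ((deriv f x) ^ 2 + f x * deriv (deriv f) x) x := by
    intro x
    have := (hfd x).hasDerivAt.fun_mul (hf'd x).hasDerivAt
    exact this.congr_deriv (by ring)
  set G : ℝ → ℝ := fun x => (deriv f x) ^ 2 + f x * deriv (deriv f) x with hG_def
  have int_G : Integrable G := hA.add int_ff''
  have h1 : ∫ x in Ioi (0:ℝ), G x = 0 - g 0 :=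
    integral_Ioi_of_hasDerivAt_of_tendsto
      ((hfc.mul hf'c).continuousWithinAt) (fun x _ => hg' x)
      int_G.integrableOn hg_top
  have h2 : ∫ x in Iic (0:ℝ), G x = g 0 - 0 :=
    integral_Iic_of_hasDerivAt_of_tendsto
      ((hfc.mul hf'c).continuousWithinAt) (fun x _ => hg' x)
      int_G.integrableOn hg_bot
  have hsplit : (∫ x : ℝ, G x) = (∫ x in Iic (0:ℝ), G x) + ∫ x in Ioi (0:ℝ), G x :=
    (intervalIntegral.integral_Iic_add_Ioi int_G.integrableOn int_G.integrableOn).symm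
  have hG0 : (∫ x : ℝ, G x) = 0 := by rw [hsplit, h1, h2]; ring
  have := integral_add hA int_ff''
  rw [hG_def] at hG0
  rw [this] at hG0
  linarith

/-- Coercivity of the constraint functional `L` on H²(ℝ) for wavespeeds `0 < c < √2`:
    one may take `δ_c = (1 - c⁴/4)/10`. H² membership is expressed by twice continuous
    differentiability together with square integrability of `f`, `f'`, `f''`. -/
theorem stmt_3 (c : ℝ) (hc0 : 0 < c) (hc : c < Real.sqrt 2) :
    ∃ δc > 0, ∀ f : ℝ → ℝ, ContDiff ℝ 2 f →
      Integrable (fun x => (f x) ^ 2) → Integrable (fun x => (deriv f x) ^ 2) →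
      Integrable (fun x => (deriv (deriv f) x) ^ 2) →
      (∫ x : ℝ, ((deriv (deriv f) x) ^ 2 - c ^ 2 * (deriv f x) ^ 2 + (f x) ^ 2)) ≥
        δc * ((∫ x : ℝ, (f x) ^ 2) + (∫ x : ℝ, (deriv f x) ^ 2) +
          (∫ x : ℝ, (deriv (deriv f) x) ^ 2)) := by
  have hc2 : c ^ 2 < 2 := by
    have h2 : (0:ℝ) ≤ 2 := by norm_num
    nlinarith [Real.sq_sqrt h2, Real.sqrt_nonneg 2]
  refine ⟨(1 - c ^ 4 / 4) / 10, by nlinarith, ?_⟩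
  intro f hf hB hA hC
  have hfc : Continuous f := (hf.differentiable (by norm_num)).continuous
  have hf' : ContDiff ℝ 1 (deriv f) := by
    have := (contDiff_succ_iff_deriv (n := 1)).mp (by exact_mod_cast hf)
    exact this.2.2
  have hf''c : Continuous (deriv (deriv f)) := by
    have := (contDiff_succ_iff_deriv (n := 0)).mp (by exact_mod_cast hf')
    exact this.2.2.continuous
  have int_ff'' : Integrable (fun x => f x * deriv (deriv f) x) := by
    refine (hB.add hC).div_const 2 |>.mono'
      ((hfc.mul hf''c).aestronglyMeasurable) ?_
    filter_upwards with x
    rw [Real.norm_eq_abs]; exact abs_mul_le_half (f x) (deriv (deriv f) x)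
  set B := ∫ x : ℝ, (f x) ^ 2
  set A := ∫ x : ℝ, (deriv f x) ^ 2
  set C := ∫ x : ℝ, (deriv (deriv f) x) ^ 2
  have hB0 : 0 ≤ B := integral_nonneg (fun x => sq_nonneg _)
  have hA0 : 0 ≤ A := integral_nonneg (fun x => sq_nonneg _)
  have hC0 : 0 ≤ C := integral_nonneg (fun x => sq_nonneg _)
  -- interpolation: A ≤ (B + C)/2
  have hkey : A = - ∫ x : ℝ, f x * deriv (deriv f) x := key f hf hB hA hC
  have hinterp : A ≤ (B + C) / 2 := by
    have h1 : |∫ x : ℝ, f x * deriv (deriv f) x| ≤ ∫ x : ℝ, |f x * deriv (deriv f) x| := by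
      simpa only [Real.norm_eq_abs] using
        norm_integral_le_integral_norm (fun x => f x * deriv (deriv f) x) (μ := volume)
    have h2 : (∫ x : ℝ, |f x * deriv (deriv f) x|) ≤
        ∫ x : ℝ, ((f x) ^ 2 + (deriv (deriv f) x) ^ 2) / 2 := by
      refine integral_mono int_ff''.abs ((hB.add hC).div_const 2) ?_
      intro x; exact abs_mul_le_half _ _
    have h3 : (∫ x : ℝ, ((f x) ^ 2 + (deriv (deriv f) x) ^ 2) / 2) = (B + C) / 2 := by
      rw [integral_div, integral_add hB hC]
    have := neg_abs_le (∫ x : ℝ, f x * deriv (deriv f) x)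
    calc A = - ∫ x : ℝ, f x * deriv (deriv f) x := hkey
      _ ≤ |∫ x : ℝ, f x * deriv (deriv f) x| := by
          rw [← abs_neg]; exact le_abs_self _
      _ ≤ (B + C) / 2 := by rw [← h3]; exact h1.trans h2
  -- linearity of the LHS integral
  have hsub : Integrable (fun x => (deriv (deriv f) x) ^ 2 - c ^ 2 * (deriv f x) ^ 2) :=
    hC.sub (hA.const_mul _)
  have e1 : (∫ x : ℝ, ((deriv (deriv f) x) ^ 2 - c ^ 2 * (deriv f x) ^ 2 + (f x) ^ 2)) =
      (∫ x : ℝ, ((deriv (deriv f) x) ^ 2 - c ^ 2 * (deriv f x) ^ 2)) + B :=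
    integral_add hsub hB
  have e2 : (∫ x : ℝ, ((deriv (deriv f) x) ^ 2 - c ^ 2 * (deriv f x) ^ 2)) = C - c ^ 2 * A := by
    rw [integral_sub hC (hA.const_mul _), integral_const_mul]
  rw [ge_iff_le, e1, e2]
  have hdpos : 0 < 1 - c ^ 4 / 4 := by nlinarith
  have hfact : 0 ≤ (B + C) * ((2 - c ^ 2) * (34 / 3 - c ^ 2)) := by
    apply mul_nonneg (by linarith)
    apply mul_nonneg (by linarith) (by nlinarith)
  have hsubst : 0 ≤ ((B + C) / 2 - A) * (c ^ 2 + (1 - c ^ 4 / 4) / 10) := by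
    apply mul_nonneg (by linarith) (by nlinarith [sq_nonneg c])
  nlinarith [hfact, hsubst, sq_nonneg c]
end

section
/- Let λ > 0 and define M_λ = sup { I[φ] : φ ∈ H²(ℝ), L[φ] = λ }, where L[φ] = ∫ (φ'')² - c²(φ')² + φ² dx with 0 < c < √2 and I[φ] = ∫ G(φ²) dx with G as above. If M_λ > 0 for all λ > 0, then for every λ > 0 and α ∈ (0, λ): M_λ > M_α + M_{λ-α} (strict superadditivity). -/
open MeasureTheory Real Finset

/-- Strict superadditivity of `λ ↦ M_λ`, where
    `M_λ = sup { I[φ] : φ ∈ H²(ℝ), L[φ] = λ }`,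
    `L[φ] = ∫ (φ'')² - c²(φ')² + φ²`, `I[φ] = ∫ G(φ²)`,
    `G(r) = Σ_{k=1}^N a_k/(k+1) r^{k+1}`, `a_k ≥ 0` not all zero, `0 < c < √2`,
    assuming `M_λ > 0` and finiteness (bounded above) for all `λ > 0`. -/
theorem stmt_7 (c : ℝ) (hc0 : 0 < c) (hc : c < Real.sqrt 2)
    (N : ℕ) (hN : 1 ≤ N) (a : ℕ → ℝ) (ha : ∀ k, 0 ≤ a k)
    (hane : ∃ k ∈ Finset.Icc 1 N, a k ≠ 0)
    (G : ℝ → ℝ) (hG : ∀ r, G r = ∑ k ∈ Finset.Icc 1 N, a k / (k + 1) * r ^ (k + 1))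
    (H2 : (ℝ → ℝ) → Prop)
    (hH2 : ∀ φ, H2 φ ↔ ContDiff ℝ 2 φ ∧ Integrable (fun x => (φ x) ^ 2) ∧
      Integrable (fun x => (deriv φ x) ^ 2) ∧
      Integrable (fun x => (deriv (deriv φ) x) ^ 2))
    (L I : (ℝ → ℝ) → ℝ)
    (hL : ∀ φ, L φ = ∫ x : ℝ,
      ((deriv (deriv φ) x) ^ 2 - c ^ 2 * (deriv φ x) ^ 2 + (φ x) ^ 2))
    (hI : ∀ φ, I φ = ∫ x : ℝ, G ((φ x) ^ 2))
    (M : ℝ → ℝ) (hM : ∀ lam, M lam = sSup (I '' {φ | H2 φ ∧ L φ = lam}))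
    (hMpos : ∀ lam > 0, 0 < M lam)
    (hMfin : ∀ lam > 0, BddAbove (I '' {φ | H2 φ ∧ L φ = lam})) :
    ∀ lam > 0, ∀ α, 0 < α → α < lam → M lam > M α + M (lam - α) := by
  -- G is nonnegative on nonnegative inputs
  have hGnn : ∀ r : ℝ, 0 ≤ r → 0 ≤ G r := by
    intro r hr
    rw [hG]
    refine Finset.sum_nonneg fun k _ => ?_
    exact mul_nonneg (div_nonneg (ha k) (by positivity)) (pow_nonneg hr _)
  -- lower scaling bound for G
  have hkeylow : ∀ β : ℝ, 1 ≤ β → ∀ r : ℝ, 0 ≤ r → β ^ 4 * G r ≤ G (β ^ 2 * r) := by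
    intro β hβ r hr
    rw [hG, hG, Finset.mul_sum]
    refine Finset.sum_le_sum fun k hk => ?_
    have hk1 : 1 ≤ k := (Finset.mem_Icc.mp hk).1
    rw [mul_pow]
    have h1 : β ^ 4 ≤ (β ^ 2) ^ (k + 1) := by
      rw [← pow_mul]
      exact pow_le_pow_right₀ hβ (by omega)
    have hco : (0:ℝ) ≤ a k / (k + 1) := div_nonneg (ha k) (by positivity)
    calc β ^ 4 * (a k / (k + 1) * r ^ (k + 1))
        = a k / (k + 1) * (β ^ 4 * r ^ (k + 1)) := by ring
      _ ≤ a k / (k + 1) * ((β ^ 2) ^ (k + 1) * r ^ (k + 1)) := by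
          exact mul_le_mul_of_nonneg_left
            (mul_le_mul_of_nonneg_right h1 (pow_nonneg hr _)) hco
  -- upper scaling bound for G
  have hkeyup : ∀ β : ℝ, 1 ≤ β → ∀ r : ℝ, 0 ≤ r →
      G (β ^ 2 * r) ≤ β ^ (2 * (N + 1)) * G r := by
    intro β hβ r hr
    rw [hG, hG, Finset.mul_sum]
    refine Finset.sum_le_sum fun k hk => ?_
    have hkN : k ≤ N := (Finset.mem_Icc.mp hk).2
    rw [mul_pow, ← pow_mul]
    have h1 : β ^ (2 * (k + 1)) ≤ β ^ (2 * (N + 1)) :=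
      pow_le_pow_right₀ hβ (by omega)
    have hco : (0:ℝ) ≤ a k / (k + 1) := div_nonneg (ha k) (by positivity)
    calc a k / (k + 1) * (β ^ (2 * (k + 1)) * r ^ (k + 1))
        ≤ a k / (k + 1) * (β ^ (2 * (N + 1)) * r ^ (k + 1)) := by
          exact mul_le_mul_of_nonneg_left
            (mul_le_mul_of_nonneg_right h1 (pow_nonneg hr _)) hco
      _ = β ^ (2 * (N + 1)) * (a k / (k + 1) * r ^ (k + 1)) := by ring
  -- derivative facts for scaled functions
  have hderiv : ∀ φ : ℝ → ℝ, ContDiff ℝ 2 φ → ∀ β : ℝ,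
      (deriv (fun x => β * φ x) = fun x => β * deriv φ x) ∧
      (deriv (deriv (fun x => β * φ x)) = fun x => β * deriv (deriv φ) x) := by
    intro φ hφ β
    have hφd : Differentiable ℝ φ := hφ.differentiable (by norm_num)
    have hφd' : Differentiable ℝ (deriv φ) := by
      have h2 : ContDiff ℝ (1 + 1) φ := by rw [one_add_one_eq_two]; exact hφ
      exact (contDiff_succ_iff_deriv.mp h2).2.2.differentiable one_ne_zero
    have hd1 : deriv (fun x => β * φ x) = fun x => β * deriv φ x := by
      funext x; exact deriv_const_mul β (hφd x)
    refine ⟨hd1, ?_⟩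
    rw [hd1]
    funext x; exact deriv_const_mul β (hφd' x)
  -- H2 is preserved by scaling
  have hH2s : ∀ φ : ℝ → ℝ, H2 φ → ∀ β : ℝ, H2 (fun x => β * φ x) := by
    intro φ hφ β
    obtain ⟨hc2, hint0, hint1, hint2⟩ := (hH2 φ).mp hφ
    obtain ⟨hd1, hd2⟩ := hderiv φ hc2 β
    rw [hH2]
    refine ⟨contDiff_const.mul hc2, ?_, ?_, ?_⟩
    · exact (hint0.const_mul (β ^ 2)).congr
        (Filter.Eventually.of_forall fun x => by ring)
    · simp only [hd1]
      exact (hint1.const_mul (β ^ 2)).congr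
        (Filter.Eventually.of_forall fun x => by ring)
    · simp only [hd2]
      exact (hint2.const_mul (β ^ 2)).congr
        (Filter.Eventually.of_forall fun x => by ring)
  -- L scales quadratically
  have hLs : ∀ φ : ℝ → ℝ, ContDiff ℝ 2 φ → ∀ β : ℝ,
      L (fun x => β * φ x) = β ^ 2 * L φ := by
    intro φ hφ β
    obtain ⟨hd1, hd2⟩ := hderiv φ hφ β
    rw [hL, hL, ← integral_const_mul]
    simp only [hd2]
    simp only [hd1]
    congr 1
    funext x
    ring
  -- I satisfies I(βφ) ≥ β⁴ I(φ) for β ≥ 1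
  have hIs : ∀ φ : ℝ → ℝ, ContDiff ℝ 2 φ → ∀ β : ℝ, 1 ≤ β →
      β ^ 4 * I φ ≤ I (fun x => β * φ x) := by
    intro φ hφ β hβ
    have hφc : Continuous φ := hφ.continuous
    rw [hI, hI]
    have hcongr : ∀ x : ℝ, G ((β * φ x) ^ 2) = G (β ^ 2 * (φ x) ^ 2) := fun x => by
      rw [mul_pow]
    have hgc : Continuous fun x => G ((φ x) ^ 2) := by
      simp only [hG]
      exact continuous_finset_sum _ fun k _ =>
        continuous_const.mul ((hφc.pow 2).pow (k + 1))
    have hhc : Continuous fun x => G ((β * φ x) ^ 2) := by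
      simp only [hG]
      exact continuous_finset_sum _ fun k _ =>
        continuous_const.mul (((continuous_const.mul hφc).pow 2).pow (k + 1))
    have hg0 : ∀ x : ℝ, 0 ≤ G ((φ x) ^ 2) := fun x => hGnn _ (sq_nonneg _)
    have hh0 : ∀ x : ℝ, 0 ≤ G ((β * φ x) ^ 2) := fun x => hGnn _ (sq_nonneg _)
    have hlow : ∀ x : ℝ, β ^ 4 * G ((φ x) ^ 2) ≤ G ((β * φ x) ^ 2) := by
      intro x; rw [hcongr]; exact hkeylow β hβ _ (sq_nonneg _)
    have hup : ∀ x : ℝ, G ((β * φ x) ^ 2) ≤ β ^ (2 * (N + 1)) * G ((φ x) ^ 2) := by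
      intro x; rw [hcongr]; exact hkeyup β hβ _ (sq_nonneg _)
    have hβ4 : (1:ℝ) ≤ β ^ 4 := one_le_pow₀ hβ
    by_cases hgint : Integrable (fun x => G ((φ x) ^ 2)) volume
    · have hhint : Integrable (fun x => G ((β * φ x) ^ 2)) volume := by
        refine Integrable.mono' (hgint.const_mul (β ^ (2 * (N + 1))))
          hhc.aestronglyMeasurable ?_
        filter_upwards with x
        rw [Real.norm_eq_abs, abs_of_nonneg (hh0 x)]
        exact hup x
      calc β ^ 4 * ∫ x, G ((φ x) ^ 2)
          = ∫ x, β ^ 4 * G ((φ x) ^ 2) := (integral_const_mul _ _).symm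
        _ ≤ ∫ x, G ((β * φ x) ^ 2) :=
            integral_mono (hgint.const_mul _) hhint hlow
    · have hhint : ¬ Integrable (fun x => G ((β * φ x) ^ 2)) volume := by
        intro hh
        refine hgint (Integrable.mono' hh hgc.aestronglyMeasurable ?_)
        filter_upwards with x
        rw [Real.norm_eq_abs, abs_of_nonneg (hg0 x)]
        calc G ((φ x) ^ 2) ≤ β ^ 4 * G ((φ x) ^ 2) :=
              le_mul_of_one_le_left (hg0 x) hβ4
          _ ≤ G ((β * φ x) ^ 2) := hlow x
      rw [integral_undef hgint, integral_undef hhint, mul_zero]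
  -- the key monotonicity: M ν ≥ (ν/μ)² M μ for 0 < μ < ν
  have key : ∀ μ ν : ℝ, 0 < μ → μ < ν → (ν / μ) ^ 2 * M μ ≤ M ν := by
    intro μ ν hμ hμν
    have hν : 0 < ν := hμ.trans hμν
    have hne : (I '' {φ | H2 φ ∧ L φ = μ}).Nonempty := by
      by_contra h
      rw [Set.not_nonempty_iff_eq_empty] at h
      have hpos := hMpos μ hμ
      rw [hM, h, Real.sSup_empty] at hpos
      linarith
    have hstep : ∀ y ∈ I '' {φ | H2 φ ∧ L φ = μ}, (ν / μ) ^ 2 * y ≤ M ν := by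
      rintro y ⟨φ, ⟨hφH2, hφL⟩, rfl⟩
      have hφc2 : ContDiff ℝ 2 φ := ((hH2 φ).mp hφH2).1
      set β := Real.sqrt (ν / μ) with hβdef
      have hr1 : (1:ℝ) ≤ ν / μ := (one_le_div hμ).mpr hμν.le
      have hβ2 : β ^ 2 = ν / μ := Real.sq_sqrt (by positivity)
      have hβ1 : 1 ≤ β := by
        rw [show (1:ℝ) = Real.sqrt 1 from (Real.sqrt_one).symm]
        exact Real.sqrt_le_sqrt hr1
      have hmem : I (fun x => β * φ x) ∈ I '' {φ | H2 φ ∧ L φ = ν} := by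
        refine ⟨fun x => β * φ x, ⟨hH2s φ hφH2 β, ?_⟩, rfl⟩
        rw [hLs φ hφc2 β, hφL, hβ2]
        field_simp
      have h1 : I (fun x => β * φ x) ≤ M ν := by
        rw [hM]
        exact le_csSup (hMfin ν hν) hmem
      have h2 : β ^ 4 * I φ ≤ I (fun x => β * φ x) := hIs φ hφc2 β hβ1
      have hβ4 : β ^ 4 = (ν / μ) ^ 2 := by rw [show β ^ 4 = (β ^ 2) ^ 2 by ring, hβ2]
      linarith [hβ4 ▸ h2]
    have hle : M μ ≤ M ν / (ν / μ) ^ 2 := by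
      rw [hM]
      refine csSup_le hne fun y hy => ?_
      have := hstep y hy
      rw [le_div_iff₀ (by positivity)]
      linarith [this, mul_comm y ((ν / μ) ^ 2)]
    have hpos : (0:ℝ) < (ν / μ) ^ 2 := by positivity
    calc (ν / μ) ^ 2 * M μ ≤ (ν / μ) ^ 2 * (M ν / (ν / μ) ^ 2) :=
          mul_le_mul_of_nonneg_left hle hpos.le
      _ = M ν := by field_simp
  -- conclude
  intro lam hlam α hα hαlam
  have hβ' : 0 < lam - α := by linarith
  have k1 := key α lam hα hαlam
  have k2 := key (lam - α) lam hβ' (by linarith)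
  have p1 := hMpos α hα
  have p2 := hMpos (lam - α) hβ'
  have plam := hMpos lam hlam
  have e1 : lam ^ 2 * M α ≤ α ^ 2 * M lam := by
    rw [div_pow, div_mul_eq_mul_div, div_le_iff₀ (by positivity)] at k1
    linarith
  have e2 : lam ^ 2 * M (lam - α) ≤ (lam - α) ^ 2 * M lam := by
    rw [div_pow, div_mul_eq_mul_div, div_le_iff₀ (by positivity)] at k2
    linarith
  nlinarith [mul_pos (mul_pos hα hβ') plam, mul_pos hlam hlam]
end

section
/- Let 0 < c < √2. Then M_λ := sup{ I[φ] : φ ∈ H²(ℝ), L[φ] = λ } is finite for every λ > 0; more precisely M_λ ≤ C G(λ) for some constant C depending only on c and the polynomial F. -/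
open MeasureTheory Real Finset Set

-- products are integrable
lemma mul_int (f g : ℝ → ℝ) (hf : Continuous f) (hg : Continuous g)
    (hif : Integrable (fun x => f x ^ 2)) (hig : Integrable (fun x => g x ^ 2)) :
    Integrable (fun x => f x * g x) := by
  refine (hif.add hig).mono' ((hf.mul hg).aestronglyMeasurable) ?_
  filter_upwards with x
  have := sq_nonneg (|f x| - |g x|)
  simp only [Real.norm_eq_abs, abs_mul, Pi.add_apply]
  nlinarith [sq_abs (f x), sq_abs (g x), abs_nonneg (f x), abs_nonneg (g x)]

lemma key_est (φ : ℝ → ℝ) (hφ : ContDiff ℝ 2 φ)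
    (hi0 : Integrable (fun x => (φ x) ^ 2))
    (hi1 : Integrable (fun x => (deriv φ x) ^ 2))
    (hi2 : Integrable (fun x => (deriv (deriv φ) x) ^ 2)) :
    (∫ x, (deriv φ x) ^ 2) ≤ ((∫ x, (deriv (deriv φ) x) ^ 2) + ∫ x, (φ x) ^ 2) / 2 ∧
    ∀ x, (φ x) ^ 2 ≤ (∫ x, (φ x) ^ 2) + ∫ x, (deriv φ x) ^ 2 := by
  have hc1 : ContDiff ℝ 1 (deriv φ) := by
    have h : ContDiff ℝ ((1:ℕ∞)+1) φ := by exact_mod_cast hφ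
    exact (contDiff_succ_iff_deriv.mp h).2.2
  have hcφ : Continuous φ := hφ.continuous
  have hcφ' : Continuous (deriv φ) := hc1.continuous
  have hcφ'' : Continuous (deriv (deriv φ)) := hc1.continuous_deriv le_rfl
  have hd1 : ∀ x, HasDerivAt φ (deriv φ x) x :=
    fun x => (hφ.differentiable two_ne_zero x).hasDerivAt
  have hd2 : ∀ x, HasDerivAt (deriv φ) (deriv (deriv φ) x) x :=
    fun x => (hc1.differentiable one_ne_zero x).hasDerivAt
  -- integrable products
  have hpp' : Integrable (fun x => φ x * deriv φ x) := mul_int _ _ hcφ hcφ' hi0 hi1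
  have hpp'' : Integrable (fun x => φ x * deriv (deriv φ) x) := mul_int _ _ hcφ hcφ'' hi0 hi2
  have hp'p'' : Integrable (fun x => deriv φ x * deriv (deriv φ) x) :=
    mul_int _ _ hcφ' hcφ'' hi1 hi2
  have hi1' : Integrable (fun x => deriv φ x * deriv φ x) := by simpa [sq] using hi1
  -- integration by parts: ∫ φ'^2 = -∫ φ φ''
  have ibp : (∫ x, (deriv φ x) ^ 2) = - ∫ x, φ x * deriv (deriv φ) x := by
    have hD : ∀ x, HasDerivAt (fun y => φ y * deriv φ y)
        (deriv φ x * deriv φ x + φ x * deriv (deriv φ) x) x :=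
      fun x => (hd1 x).mul (hd2 x)
    have h0 : (∫ x, (deriv φ x * deriv φ x + φ x * deriv (deriv φ) x)) = 0 :=
      integral_eq_zero_of_hasDerivAt_of_integrable hD (hi1'.add hpp'') hpp'
    rw [integral_add hi1' hpp''] at h0
    have : (∫ x, deriv φ x * deriv φ x) = ∫ x, (deriv φ x)^2 := by
      congr 1; ext x; ring
    linarith [this ▸ h0]
  constructor
  · rw [ibp]
    have : (- ∫ x, φ x * deriv (deriv φ) x) = ∫ x, -(φ x * deriv (deriv φ) x) := by
      rw [integral_neg]
    rw [this]
    have hmono : (∫ x, -(φ x * deriv (deriv φ) x)) ≤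
        ∫ x, ((deriv (deriv φ) x)^2 + (φ x)^2)/2 := by
      refine integral_mono hpp''.neg ((hi2.add hi0).div_const 2) ?_
      intro x
      have := sq_nonneg (φ x + deriv (deriv φ) x)
      simp only [Pi.neg_apply]
      nlinarith
    calc (∫ x, -(φ x * deriv (deriv φ) x)) ≤ ∫ x, ((deriv (deriv φ) x)^2 + (φ x)^2)/2 := hmono
      _ = ((∫ x, (deriv (deriv φ) x) ^ 2) + ∫ x, (φ x) ^ 2) / 2 := by
          rw [integral_div, integral_add hi2 hi0]
  · intro x
    -- sup bound via FTC on Iic x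
    have hDsq : ∀ t, HasDerivAt (fun y => (φ y)^2) (2 * (φ t * deriv φ t)) t := by
      intro t
      have h : HasDerivAt (fun y => φ y * φ y) (deriv φ t * φ t + φ t * deriv φ t) t :=
        (hd1 t).mul (hd1 t)
      have e : (fun y => (φ y)^2) = (fun y => φ y * φ y) := by ext y; ring
      rw [e]
      convert h using 1
      ring
    have h2pp' : Integrable (fun t => 2 * (φ t * deriv φ t)) := hpp'.const_mul 2
    have htend : Filter.Tendsto (fun y => (φ y)^2) Filter.atBot (nhds 0) :=
      tendsto_zero_of_hasDerivAt_of_integrableOn_Iic (a := x)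
        (fun t _ => hDsq t) h2pp'.integrableOn hi0.integrableOn
    have hftc : (∫ t in Iic x, 2 * (φ t * deriv φ t)) = (φ x)^2 - 0 :=
      integral_Iic_of_hasDerivAt_of_tendsto' (fun t _ => hDsq t) h2pp'.integrableOn htend
    have hb1 : (∫ t in Iic x, 2 * (φ t * deriv φ t)) ≤
        ∫ t in Iic x, ((φ t)^2 + (deriv φ t)^2) := by
      refine setIntegral_mono_on h2pp'.integrableOn (hi0.add hi1).integrableOn
        measurableSet_Iic ?_
      intro t _
      nlinarith [sq_nonneg (φ t - deriv φ t)]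
    have hb2 : (∫ t in Iic x, ((φ t)^2 + (deriv φ t)^2)) ≤
        ∫ t, ((φ t)^2 + (deriv φ t)^2) := by
      refine setIntegral_le_integral (hi0.add hi1) ?_
      filter_upwards with t; positivity
    have := integral_add hi0 hi1
    nlinarith [hftc, hb1, hb2, this]

/-- Finiteness of `M_λ = sup { I[φ] : φ ∈ H²(ℝ), L[φ] = λ }` for `0 < c < √2`:
    in fact `M_λ ≤ C G(λ)` for a constant `C` depending only on `c` and the
    coefficients of the polynomial nonlinearity. -/
theorem stmt_9 (c : ℝ) (hc0 : 0 < c) (hc : c < Real.sqrt 2)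
    (N : ℕ) (hN : 1 ≤ N) (a : ℕ → ℝ) (ha : ∀ k, 0 ≤ a k)
    (G : ℝ → ℝ) (hG : ∀ r, G r = ∑ k ∈ Finset.Icc 1 N, a k / (k + 1) * r ^ (k + 1))
    (H2 : (ℝ → ℝ) → Prop)
    (hH2 : ∀ φ, H2 φ ↔ ContDiff ℝ 2 φ ∧ Integrable (fun x => (φ x) ^ 2) ∧
      Integrable (fun x => (deriv φ x) ^ 2) ∧
      Integrable (fun x => (deriv (deriv φ) x) ^ 2))
    (L I : (ℝ → ℝ) → ℝ)
    (hL : ∀ φ, L φ = ∫ x : ℝ,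
      ((deriv (deriv φ) x) ^ 2 - c ^ 2 * (deriv φ x) ^ 2 + (φ x) ^ 2))
    (hI : ∀ φ, I φ = ∫ x : ℝ, G ((φ x) ^ 2))
    (M : ℝ → ℝ) (hM : ∀ lam, M lam = sSup (I '' {φ | H2 φ ∧ L φ = lam})) :
    ∃ C > 0, ∀ lam > 0, M lam ≤ C * G lam := by
  have hc2 : c ^ 2 < 2 := (Real.lt_sqrt hc0.le).mp hc
  set δ : ℝ := 1 - c ^ 2 / 2 with hδdef
  have hδ : 0 < δ := by simp only [hδdef]; linarith
  set K : ℝ := max 1 (3 / (2 * δ)) with hKdef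
  have hK1 : (1 : ℝ) ≤ K := le_max_left _ _
  have hK0 : (0 : ℝ) < K := lt_of_lt_of_le one_pos hK1
  refine ⟨K ^ N / δ, by positivity, ?_⟩
  intro lam hlam
  have hGlam : 0 ≤ G lam := by
    rw [hG]
    refine Finset.sum_nonneg fun k _ => ?_
    have := ha k
    positivity
  rw [hM]
  refine Real.sSup_le ?_ (by positivity)
  rintro y ⟨φ, ⟨hHφ, hLφ⟩, rfl⟩
  rw [hH2] at hHφ
  obtain ⟨hφ, hi0, hi1, hi2⟩ := hHφ
  obtain ⟨hB, hsup⟩ := key_est φ hφ hi0 hi1 hi2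
  set A : ℝ := ∫ x, (deriv (deriv φ) x) ^ 2 with hAdef
  set B : ℝ := ∫ x, (deriv φ x) ^ 2 with hBdef
  set D : ℝ := ∫ x, (φ x) ^ 2 with hDdef
  have hA0 : 0 ≤ A := integral_nonneg fun x => sq_nonneg _
  have hB0 : 0 ≤ B := integral_nonneg fun x => sq_nonneg _
  have hD0 : 0 ≤ D := integral_nonneg fun x => sq_nonneg _
  have hmul : Integrable (fun x => c ^ 2 * (deriv φ x) ^ 2) := hi1.const_mul _
  have hsub : Integrable (fun x => (deriv (deriv φ) x) ^ 2 - c ^ 2 * (deriv φ x) ^ 2) :=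
    hi2.sub hmul
  have hlamAD : lam = A - c ^ 2 * B + D := by
    rw [hL] at hLφ
    rw [← hLφ, integral_add hsub hi0, integral_sub hi2 hmul, integral_const_mul]
  have hADd : (A + D) * δ ≤ lam := by
    rw [hδdef]
    nlinarith [mul_le_mul_of_nonneg_left hB (sq_nonneg c)]
  have hAD : A + D ≤ lam / δ := (le_div_iff₀ hδ).mpr hADd
  have hsupb : ∀ x, (φ x) ^ 2 ≤ K * lam := by
    intro x
    have h1 : (φ x) ^ 2 ≤ D + B := hsup x
    have h2 : D + B ≤ 3 / (2 * δ) * lam := by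
      rw [div_mul_eq_mul_div, le_div_iff₀ (by positivity)]
      nlinarith [mul_le_mul_of_nonneg_right
        (show D + B ≤ 3 / 2 * (A + D) by linarith) (by positivity : (0:ℝ) ≤ 2 * δ), hADd]
    have h3 : 3 / (2 * δ) * lam ≤ K * lam :=
      mul_le_mul_of_nonneg_right (le_max_right _ _) hlam.le
    linarith
  set c0 : ℝ := ∑ k ∈ Finset.Icc 1 N, a k / (k + 1) * (K * lam) ^ k with hc0def
  have hc00 : 0 ≤ c0 := by
    refine Finset.sum_nonneg fun k _ => ?_
    have := ha k
    positivity
  have hptw : ∀ x, G ((φ x) ^ 2) ≤ c0 * (φ x) ^ 2 := by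
    intro x
    rw [hG, hc0def, Finset.sum_mul]
    refine Finset.sum_le_sum fun k _ => ?_
    have h2 : ((φ x) ^ 2) ^ k ≤ (K * lam) ^ k :=
      pow_le_pow_left₀ (sq_nonneg _) (hsupb x) k
    have hak : 0 ≤ a k / (k + 1) := by have := ha k; positivity
    calc a k / (k + 1) * ((φ x) ^ 2) ^ (k + 1)
        = a k / (k + 1) * ((φ x) ^ 2) ^ k * (φ x) ^ 2 := by rw [pow_succ]; ring
      _ ≤ a k / (k + 1) * (K * lam) ^ k * (φ x) ^ 2 := by
          have := sq_nonneg (φ x)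
          gcongr
  have hGnn : ∀ x, 0 ≤ G ((φ x) ^ 2) := by
    intro x
    rw [hG]
    refine Finset.sum_nonneg fun k _ => ?_
    have := ha k
    positivity
  have hIb : I φ ≤ c0 * D := by
    rw [hI]
    have h := integral_mono_of_nonneg (Filter.Eventually.of_forall hGnn)
      (hi0.const_mul c0) (Filter.Eventually.of_forall hptw)
    rwa [integral_const_mul] at h
  have hDlam : D ≤ lam / δ := by linarith
  have hstep : c0 * D ≤ c0 * (lam / δ) := mul_le_mul_of_nonneg_left hDlam hc00
  have hfin : c0 * (lam / δ) ≤ K ^ N / δ * G lam := by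
    rw [hG, hc0def, Finset.sum_mul, Finset.mul_sum]
    refine Finset.sum_le_sum fun k hk => ?_
    obtain ⟨hk1, hkN⟩ := Finset.mem_Icc.mp hk
    have hKk : K ^ k ≤ K ^ N := pow_le_pow_right₀ hK1 hkN
    have hX : 0 ≤ a k / (k + 1) * lam ^ (k + 1) := by
      have := ha k
      positivity
    calc a k / (k + 1) * (K * lam) ^ k * (lam / δ)
        = a k / (k + 1) * lam ^ (k + 1) * K ^ k / δ := by
          rw [mul_pow, pow_succ]; ring
      _ ≤ a k / (k + 1) * lam ^ (k + 1) * K ^ N / δ := by gcongr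
      _ = K ^ N / δ * (a k / (k + 1) * lam ^ (k + 1)) := by ring
  linarith
end

section
/- Let 0 < c < √2, δ = √(2-c²)/2, and suppose φ : ℝ → ℝ is bounded, continuous, and satisfies φ = K * (φ³) pointwise, where |K(x)| ≤ C e^{-δ|x|}. If |φ(x)| ≤ C₁ e^{-δ₁|x|} for some δ₁ with 0 < 3δ₁ < δ, then |φ(x)| ≤ C₂ e^{-3δ₁|x|} for some constant C₂. -/
open MeasureTheory Real

private lemma integrable_exp_neg_mul_abs_aux {m : ℝ} (hm : 0 < m) :
    Integrable (fun t : ℝ => Real.exp (-m * |t|)) := by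
  have h1 : IntegrableOn (fun t : ℝ => Real.exp (-m * |t|)) (Set.Ioi 0) := by
    refine (exp_neg_integrableOn_Ioi 0 hm).congr_fun ?_ measurableSet_Ioi
    intro x hx
    simp [abs_of_pos (Set.mem_Ioi.mp hx)]
  have h2 : IntegrableOn (fun t : ℝ => Real.exp (-m * |t|)) (Set.Iic 0) := by
    rw [IntegrableOn, ← Measure.map_neg_eq_self (volume : Measure ℝ)]
    have m' : MeasurableEmbedding fun x : ℝ => -x :=
      (Homeomorph.neg ℝ).measurableEmbedding
    rw [← IntegrableOn, m'.integrableOn_map_iff]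
    simp_rw [Function.comp_def, abs_neg, Set.neg_preimage, Set.neg_Iic, neg_zero]
    exact Iff.mpr integrableOn_Ici_iff_integrableOn_Ioi h1
  have := h2.union h1
  rwa [Set.Iic_union_Ioi, integrableOn_univ] at this

/-- Decay bootstrap: if `φ` is bounded and continuous, solves the convolution
    fixed-point equation `φ = K * φ³` with `|K(x)| ≤ C e^{-δ|x|}`, `δ = √(2-c²)/2`,
    and `|φ(x)| ≤ C₁ e^{-δ₁|x|}` with `0 < 3δ₁ < δ`, then
    `|φ(x)| ≤ C₂ e^{-3δ₁|x|}` for some constant `C₂`. -/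
theorem stmt_16 (c : ℝ) (hc0 : 0 < c) (hc : c < Real.sqrt 2)
    (δ : ℝ) (hδ : δ = Real.sqrt (2 - c ^ 2) / 2)
    (K φ : ℝ → ℝ) (hKmeas : Measurable K)
    (C : ℝ) (hC : 0 < C) (hK : ∀ x, |K x| ≤ C * Real.exp (-δ * |x|))
    (hφb : ∃ B, ∀ x, |φ x| ≤ B) (hφc : Continuous φ)
    (hfix : ∀ x, φ x = ∫ y : ℝ, K (x - y) * (φ y) ^ 3)
    (δ₁ : ℝ) (hδ₁ : 0 < δ₁) (hδ₁δ : 3 * δ₁ < δ)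
    (C₁ : ℝ) (hC₁ : 0 < C₁) (hφ : ∀ x, |φ x| ≤ C₁ * Real.exp (-δ₁ * |x|)) :
    ∃ C₂ > 0, ∀ x : ℝ, |φ x| ≤ C₂ * Real.exp (-(3 * δ₁) * |x|) := by
  have hba : 0 < δ - 3 * δ₁ := by linarith
  have hI : Integrable (fun t : ℝ => Real.exp (-(δ - 3 * δ₁) * |t|)) :=
    integrable_exp_neg_mul_abs_aux hba
  set I : ℝ := ∫ t : ℝ, Real.exp (-(δ - 3 * δ₁) * |t|) with hIdef
  have hIpos : 0 < I := by
    rw [hIdef, integral_pos_iff_support_of_nonneg (fun t => (Real.exp_pos _).le) hI]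
    have hsupp : (Function.support fun t : ℝ => Real.exp (-(δ - 3 * δ₁) * |t|)) =
        Set.univ := Set.eq_univ_of_forall fun t => (Real.exp_pos _).ne'
    rw [hsupp]
    simp
  refine ⟨C * C₁ ^ 3 * I, by positivity, fun x => ?_⟩
  -- the dominating function
  set g : ℝ → ℝ := fun y =>
    C * C₁ ^ 3 * Real.exp (-(3 * δ₁) * |x|) * Real.exp (-(δ - 3 * δ₁) * |x - y|) with hgdef
  have hg : Integrable g := (hI.comp_sub_left x).const_mul _
  -- pointwise bound
  have hbound : ∀ y : ℝ, |K (x - y) * φ y ^ 3| ≤ g y := by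
    intro y
    have h1 : |K (x - y)| ≤ C * Real.exp (-δ * |x - y|) := hK _
    have h2 : |φ y ^ 3| ≤ C₁ ^ 3 * Real.exp (-(3 * δ₁) * |y|) := by
      have := hφ y
      calc |φ y ^ 3| = |φ y| ^ 3 := by rw [abs_pow]
        _ ≤ (C₁ * Real.exp (-δ₁ * |y|)) ^ 3 := by
            exact pow_le_pow_left₀ (abs_nonneg _) this 3
        _ = C₁ ^ 3 * Real.exp (-(3 * δ₁) * |y|) := by
            rw [mul_pow, ← Real.exp_nat_mul]
            ring_nf
    have htri : |x| ≤ |x - y| + |y| := by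
      calc |x| = |(x - y) + y| := by ring_nf
        _ ≤ |x - y| + |y| := abs_add_le _ _
    calc |K (x - y) * φ y ^ 3| = |K (x - y)| * |φ y ^ 3| := abs_mul _ _
      _ ≤ (C * Real.exp (-δ * |x - y|)) * (C₁ ^ 3 * Real.exp (-(3 * δ₁) * |y|)) := by
          exact mul_le_mul h1 h2 (abs_nonneg _) (by positivity)
      _ = C * C₁ ^ 3 * Real.exp (-δ * |x - y| + -(3 * δ₁) * |y|) := by
          rw [Real.exp_add]; ring
      _ ≤ g y := by
          rw [hgdef]
          simp only
          rw [mul_assoc (C * C₁ ^ 3), ← Real.exp_add]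
          have : -δ * |x - y| + -(3 * δ₁) * |y| ≤
              -(3 * δ₁) * |x| + -(δ - 3 * δ₁) * |x - y| := by nlinarith
          exact mul_le_mul_of_nonneg_left (Real.exp_le_exp.mpr this) (by positivity)
  -- integrability of the integrand
  have hmeas : AEStronglyMeasurable (fun y : ℝ => K (x - y) * φ y ^ 3) volume :=
    ((hKmeas.comp (measurable_const.sub measurable_id)).mul
      (hφc.measurable.pow_const 3)).aestronglyMeasurable
  have hf : Integrable (fun y : ℝ => K (x - y) * φ y ^ 3) :=
    hg.mono' hmeas (ae_of_all _ fun y => by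
      simpa [Real.norm_eq_abs, abs_mul, abs_pow] using hbound y)
  -- conclude
  rw [hfix x]
  calc |∫ y : ℝ, K (x - y) * φ y ^ 3| ≤ ∫ y : ℝ, |K (x - y) * φ y ^ 3| :=
        by simpa only [Real.norm_eq_abs] using
          norm_integral_le_integral_norm (μ := volume) (fun y : ℝ => K (x - y) * φ y ^ 3)
    _ ≤ ∫ y : ℝ, g y := integral_mono hf.abs hg (fun y => hbound y)
    _ = C * C₁ ^ 3 * Real.exp (-(3 * δ₁) * |x|) *
        ∫ y : ℝ, Real.exp (-(δ - 3 * δ₁) * |x - y|) := by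
        rw [hgdef, integral_const_mul]
    _ = C * C₁ ^ 3 * Real.exp (-(3 * δ₁) * |x|) * I := by
        rw [hIdef, integral_sub_left_eq_self (fun t : ℝ => Real.exp (-(δ - 3 * δ₁) * |t|))
          volume x]
    _ = C * C₁ ^ 3 * I * Real.exp (-(3 * δ₁) * |x|) := by ring
end
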